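/- arXiv:1410.0572 — 9 statements merged into one kernel-verified Lean document; each statement's English description precedes it below -/
import Mathlib

section
/- For a reflexive binary relation R on a set S, R is proto-transitive if and only if τ(R) = R ∩ R⁻¹ is an equivalence relation on S. -/
/-- `R` is proto-transitive. -/
def ProtoTransitive {S : Type*} (R : S → S → Prop) : Prop :=
  ∀ x y z : S, x ≠ y → y ≠ z → R x y → R y x → R y z → R z y → R x z

/-- `τ(R) = R ∩ R⁻¹`. -/
def tauRel {S : Type*} (R : S → S → Prop) : S → S → Prop :=
  fun x y => R x y ∧ R y x

/-- for a reflexive relation `R`, `R` is proto-transitive iff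
`τ(R) = R ∩ R⁻¹` is an equivalence relation. -/
theorem protoTransitive_iff_tau_equivalence {S : Type*} (R : S → S → Prop)
    (hrefl : ∀ x : S, R x x) :
    ProtoTransitive R ↔ Equivalence (tauRel R) := by
  constructor
  · intro h
    refine ⟨fun x => ⟨hrefl x, hrefl x⟩, fun h' => ⟨h'.2, h'.1⟩, ?_⟩
    rintro x y z ⟨hxy, hyx⟩ ⟨hyz, hzy⟩
    by_cases hxy' : x = y
    · subst hxy'; exact ⟨hyz, hzy⟩
    by_cases hyz' : y = z
    · subst hyz'; exact ⟨hxy, hyx⟩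
    exact ⟨h x y z hxy' hyz' hxy hyx hyz hzy,
      h z y x (Ne.symm hyz') (Ne.symm hxy') hzy hyz hyx hxy⟩
  · intro h x y z _ _ hxy hyx hyz hzy
    exact (h.trans ⟨hxy, hyx⟩ ⟨hyz, hzy⟩).1
end

section
/- In a PRAX (S,R): every upper proto-definite subset is also u_o-definite, i.e. if A^u = A then A^{u_o} = A; moreover the collection of upper proto-definite subsets {A ⊆ S : A^u = A} is closed under arbitrary unions and arbitrary (nonempty) intersections, so it forms a complete sublattice of the powerset of S under inclusion. -/
/-- Successor neighborhood `[x] = {y | R y x}`. -/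
def nbhd {S : Type*} (R : S → S → Prop) (x : S) : Set S := {y | R y x}

/-- Symmetrized successor neighborhood `[x]ₒ = {y | R y x ∧ R x y}`. -/
def nbhdO {S : Type*} (R : S → S → Prop) (x : S) : Set S := {y | R y x ∧ R x y}

/-- Lower proto approximation `A^l = ⋃ {[x] | [x] ⊆ A}`. -/
def lowerP {S : Type*} (R : S → S → Prop) (A : Set S) : Set S :=
  {z | ∃ x : S, z ∈ nbhd R x ∧ nbhd R x ⊆ A}

/-- Upper proto approximation `A^u = ⋃ {[x] | [x] ∩ A ≠ ∅}`. -/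
def upperP {S : Type*} (R : S → S → Prop) (A : Set S) : Set S :=
  {z | ∃ x : S, z ∈ nbhd R x ∧ (nbhd R x ∩ A).Nonempty}

/-- Symmetrized lower proto approximation `A^{l_o}`. -/
def lowerO {S : Type*} (R : S → S → Prop) (A : Set S) : Set S :=
  {z | ∃ x : S, z ∈ nbhdO R x ∧ nbhdO R x ⊆ A}

/-- Symmetrized upper proto approximation `A^{u_o}`. -/
def upperO {S : Type*} (R : S → S → Prop) (A : Set S) : Set S :=
  {z | ∃ x : S, z ∈ nbhdO R x ∧ (nbhdO R x ∩ A).Nonempty}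

/-- Point-wise lower approximation `A^{l+} = {x | [x] ⊆ A}`. -/
def lPlus {S : Type*} (R : S → S → Prop) (A : Set S) : Set S :=
  {x | nbhd R x ⊆ A}

/-- Point-wise upper approximation `A^{u+} = {x | [x] ∩ A ≠ ∅}`. -/
def uPlus {S : Type*} (R : S → S → Prop) (A : Set S) : Set S :=
  {x | (nbhd R x ∩ A).Nonempty}

/-- in a PRAX, every upper proto-definite set is `u_o`-definite, and the
upper proto-definite sets are closed under arbitrary unions and arbitrary nonempty
intersections (hence form a complete sublattice of the powerset under inclusion). -/
theorem upperDefinite_props {S : Type*} (R : S → S → Prop)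
    (hrefl : ∀ x : S, R x x) (hproto : ProtoTransitive R) :
    (∀ A : Set S, upperP R A = A → upperO R A = A) ∧
    (∀ 𝒜 : Set (Set S), (∀ A ∈ 𝒜, upperP R A = A) → upperP R (⋃₀ 𝒜) = ⋃₀ 𝒜) ∧
    (∀ 𝒜 : Set (Set S), 𝒜.Nonempty → (∀ A ∈ 𝒜, upperP R A = A) →
      upperP R (⋂₀ 𝒜) = ⋂₀ 𝒜) := by
  refine ⟨?_, ?_, ?_⟩
  · intro A hA
    ext z
    constructor
    · rintro ⟨x, ⟨hzx, hxz⟩, w, ⟨hwx, hxw⟩, hwA⟩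
      rw [← hA]
      exact ⟨x, hzx, w, hwx, hwA⟩
    · intro hz
      exact ⟨z, ⟨hrefl z, hrefl z⟩, z, ⟨hrefl z, hrefl z⟩, hz⟩
  · intro 𝒜 h𝒜
    ext z
    constructor
    · rintro ⟨x, hzx, w, hwx, A, hA𝒜, hwA⟩
      refine ⟨A, hA𝒜, ?_⟩
      rw [← h𝒜 A hA𝒜]
      exact ⟨x, hzx, w, hwx, hwA⟩
    · rintro ⟨A, hA𝒜, hzA⟩
      exact ⟨z, hrefl z, z, hrefl z, A, hA𝒜, hzA⟩
  · intro 𝒜 _ h𝒜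
    ext z
    constructor
    · rintro ⟨x, hzx, w, hwx, hw⟩ A hA𝒜
      rw [← h𝒜 A hA𝒜]
      exact ⟨x, hzx, w, hwx, hw A hA𝒜⟩
    · intro hz
      exact ⟨z, hrefl z, z, hrefl z, hz⟩
end

section
/- In a PRAX (S,R), for any A, B ⊆ S: sk(A) = sk(B) if and only if A^l = B^l and A^{l+} = B^{l+}; moreover if B ∈ sk(A) then A^l ⊆ B^u. -/
/-- Skeletons of `A`: subsets `B ⊆ A^{l+}` with `⋃_{x ∈ B} [x] = A^l`. -/
def skel {S : Type*} (R : S → S → Prop) (A : Set S) : Set (Set S) :=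
  {B | B ⊆ lPlus R A ∧ (⋃ x ∈ B, nbhd R x) = lowerP R A}

/-- in a PRAX, `sk(A) = sk(B)` iff `A^l = B^l` and `A^{l+} = B^{l+}`;
moreover if `B ∈ sk(A)` then `A^l ⊆ B^u`. -/
theorem skeleton_eq_iff_and_lower_subset_upper {S : Type*} (R : S → S → Prop)
    (hrefl : ∀ x : S, R x x) (hproto : ProtoTransitive R) :
    (∀ A B : Set S, skel R A = skel R B ↔
      (lowerP R A = lowerP R B ∧ lPlus R A = lPlus R B)) ∧
    (∀ A B : Set S, B ∈ skel R A → lowerP R A ⊆ upperP R B) := by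
  constructor
  · intro A B
    constructor
    · intro h
      have hA : lPlus R A ∈ skel R A := by
        refine ⟨subset_rfl, ?_⟩
        ext z
        simp only [Set.mem_iUnion, lowerP, lPlus, Set.mem_setOf_eq]
        tauto
      have hB : lPlus R B ∈ skel R B := by
        refine ⟨subset_rfl, ?_⟩
        ext z
        simp only [Set.mem_iUnion, lowerP, lPlus, Set.mem_setOf_eq]
        tauto
      have hA' : lPlus R A ∈ skel R B := h ▸ hA
      have hB' : lPlus R B ∈ skel R A := h ▸ hB
      refine ⟨?_, Set.Subset.antisymm hA'.1 hB'.1⟩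
      rw [← hA.2, hA'.2]
    · rintro ⟨h1, h2⟩
      unfold skel
      rw [h1, h2]
  · rintro A B ⟨hsub, hun⟩ z hz
    rw [← hun] at hz
    simp only [Set.mem_iUnion] at hz
    obtain ⟨x, hxB, hzx⟩ := hz
    exact ⟨x, hzx, x, hrefl x, hxB⟩
end

section
/- In a PRAX (S,R), for every A ⊆ S: A^{l+} ⊆ A^{l_o} and A^{u_o} ⊆ A^{u+}. -/
/-- in a PRAX, `A^{l+} ⊆ A^{l_o}` and `A^{u_o} ⊆ A^{u+}`. -/
theorem lPlus_subset_lowerO_and_upperO_subset_uPlus {S : Type*} (R : S → S → Prop)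
    (hrefl : ∀ x : S, R x x) (hproto : ProtoTransitive R) (A : Set S) :
    lPlus R A ⊆ lowerO R A ∧ upperO R A ⊆ uPlus R A := by
  constructor
  · intro x hx
    exact ⟨x, ⟨hrefl x, hrefl x⟩, fun y hy => hx hy.1⟩
  · rintro z ⟨x, ⟨hzx, hxz⟩, y, ⟨hyx, hxy⟩, hyA⟩
    refine ⟨y, ?_, hyA⟩
    by_cases hyz : y = z
    · subst hyz; exact hrefl y
    by_cases hyx' : y = x
    · subst hyx'; exact hxz
    by_cases hxz' : x = z
    · subst hxz'; exact hyx
    · exact hproto y x z hyx' hxz' hyx hxy hxz hzx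
end

section
/- In a PRAX (S,R), the collection δ_{lu}(S) of proto-definite subsets (those A with A^l = A and A^u = A) is closed under binary union, binary intersection and set complement, and contains ∅ and S; hence with these operations it forms a Boolean lattice (a Boolean subalgebra of the powerset of S). -/
/-- `A` is proto-definite: `A^l = A = A^u`. -/
def ProtoDefinite {S : Type*} (R : S → S → Prop) (A : Set S) : Prop :=
  lowerP R A = A ∧ upperP R A = A

lemma protoDefinite_iff {S : Type*} (R : S → S → Prop) (hrefl : ∀ x : S, R x x)
    (A : Set S) :
    ProtoDefinite R A ↔ ∀ x : S, (nbhd R x ∩ A).Nonempty → nbhd R x ⊆ A := by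
  constructor
  · rintro ⟨-, hu⟩ x hx y hy
    have : y ∈ upperP R A := ⟨x, hy, hx⟩
    rwa [hu] at this
  · intro h
    constructor
    · apply Set.Subset.antisymm
      · rintro z ⟨x, hzx, hsub⟩; exact hsub hzx
      · intro a ha
        exact ⟨a, hrefl a, h a ⟨a, hrefl a, ha⟩⟩
    · apply Set.Subset.antisymm
      · rintro z ⟨x, hzx, hne⟩; exact h x hne hzx
      · intro a ha
        exact ⟨a, hrefl a, a, hrefl a, ha⟩

/-- in a PRAX, the proto-definite subsets contain `∅` and `S` and are
closed under binary union, binary intersection and complement; hence they form a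
Boolean sublattice of the powerset. -/
theorem protoDefinite_boolean_algebra {S : Type*} (R : S → S → Prop)
    (hrefl : ∀ x : S, R x x) (hproto : ProtoTransitive R) :
    ProtoDefinite R (∅ : Set S) ∧
    ProtoDefinite R (Set.univ : Set S) ∧
    (∀ A B : Set S, ProtoDefinite R A → ProtoDefinite R B → ProtoDefinite R (A ∪ B)) ∧
    (∀ A B : Set S, ProtoDefinite R A → ProtoDefinite R B → ProtoDefinite R (A ∩ B)) ∧
    (∀ A : Set S, ProtoDefinite R A → ProtoDefinite R Aᶜ) := by
  simp only [protoDefinite_iff R hrefl]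
  refine ⟨?_, ?_, ?_, ?_, ?_⟩
  · rintro x ⟨y, -, hy⟩; exact absurd hy (Set.notMem_empty y)
  · intro x _ y _; trivial
  · rintro A B hA hB x ⟨y, hyx, hy⟩
    rcases hy with hy | hy
    · exact fun z hz => Or.inl (hA x ⟨y, hyx, hy⟩ hz)
    · exact fun z hz => Or.inr (hB x ⟨y, hyx, hy⟩ hz)
  · rintro A B hA hB x ⟨y, hyx, hyA, hyB⟩ z hz
    exact ⟨hA x ⟨y, hyx, hyA⟩ hz, hB x ⟨y, hyx, hyB⟩ hz⟩
  · rintro A hA x ⟨y, hyx, hy⟩ z hz hzA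
    exact hy (hA x ⟨z, hz, hzA⟩ hyx)
end

section
/- In a PRAX (S,R), for every A ⊆ S the progressive set π₀(A) has empty lower approximation, i.e. (π₀(A))^l = ∅; moreover the forward-looking set satisfies (F₀(A))^u ⊆ A^u. -/
/-- The progressive set `π₀(A) = {y ∈ A : ∃ a ∉ A, R a y}`. -/
def progressiveSet {S : Type*} (R : S → S → Prop) (A : Set S) : Set S :=
  {y | y ∈ A ∧ ∃ a, a ∉ A ∧ R a y}

/-- The forward-looking set `F₀(A) = {y ∈ A : ∃ a ∉ A, R y a}`. -/
def forwardSet {S : Type*} (R : S → S → Prop) (A : Set S) : Set S :=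
  {y | y ∈ A ∧ ∃ a, a ∉ A ∧ R y a}

/-- in a PRAX, `(π₀(A))^l = ∅` and `(F₀(A))^u ⊆ A^u`. -/
theorem progressive_lower_empty_and_forward_upper_subset {S : Type*} (R : S → S → Prop)
    (hrefl : ∀ x : S, R x x) (hproto : ProtoTransitive R) (A : Set S) :
    lowerP R (progressiveSet R A) = ∅ ∧
    upperP R (forwardSet R A) ⊆ upperP R A := by
  constructor
  · ext z
    simp only [Set.mem_empty_iff_false, iff_false]
    rintro ⟨x, hzx, hsub⟩
    obtain ⟨hxA, a, haA, hax⟩ := hsub (hrefl x)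
    exact haA (hsub hax).1
  · rintro z ⟨x, hzx, w, hwx, hwA, _⟩
    exact ⟨x, hzx, w, hwx, hwA⟩
end

section
/- Let (S,R) be a PRAX and R^# the transitive closure of R. Then for every A ⊆ S: A^{l_# l} = A^{l_#} = A^{l l_#} = A^{l_# l_#} (i.e. applying the R-lower approximation after the R^#-lower approximation, or the R^#-lower approximation after the R-lower approximation, or the R^#-lower approximation twice, all give A^{l_#}). -/
/-- `[x]_# = {y | R^# y x}`, where `R^#` is the transitive closure of `R`. -/
def nbhdT {S : Type*} (R : S → S → Prop) (x : S) : Set S :=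
  {y | Relation.TransGen R y x}

/-- Lower approximation `A^{l_#}` with respect to the transitive closure `R^#`. -/
def lowerT {S : Type*} (R : S → S → Prop) (A : Set S) : Set S :=
  {z | ∃ x : S, z ∈ nbhdT R x ∧ nbhdT R x ⊆ A}

/-- Upper approximation `A^{u_#}` with respect to the transitive closure `R^#`. -/
def upperT {S : Type*} (R : S → S → Prop) (A : Set S) : Set S :=
  {z | ∃ x : S, z ∈ nbhdT R x ∧ (nbhdT R x ∩ A).Nonempty}

/-- in a PRAX, `A^{l_# l} = A^{l_#} = A^{l l_#} = A^{l_# l_#}`. -/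
theorem lowerT_absorption {S : Type*} (R : S → S → Prop)
    (hrefl : ∀ x : S, R x x) (hproto : ProtoTransitive R) (A : Set S) :
    lowerP R (lowerT R A) = lowerT R A ∧
    lowerT R (lowerP R A) = lowerT R A ∧
    lowerT R (lowerT R A) = lowerT R A := by

  refine ⟨?_, ?_, ?_⟩
  · ext z
    constructor
    · rintro ⟨x, hzx, hsub⟩
      obtain ⟨w, hxw, hwA⟩ := hsub (hrefl x)
      exact ⟨w, Relation.TransGen.head hzx hxw, hwA⟩
    · rintro ⟨x, hzx, hsub⟩
      refine ⟨z, hrefl z, fun y hy => ⟨x, Relation.TransGen.head hy hzx, hsub⟩⟩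
  · ext z
    constructor
    · rintro ⟨x, hzx, hsub⟩
      refine ⟨x, hzx, fun y hy => ?_⟩
      obtain ⟨w, hyw, hwA⟩ := hsub hy
      exact hwA hyw
    · rintro ⟨x, hzx, hsub⟩
      refine ⟨x, hzx, fun y hy => ⟨y, hrefl y, fun u hu => hsub (Relation.TransGen.head hu hy)⟩⟩
  · ext z
    constructor
    · rintro ⟨x, hzx, hsub⟩
      obtain ⟨w, hxw, hwA⟩ := hsub (Relation.TransGen.single (hrefl x))
      exact ⟨w, hzx.trans hxw, hwA⟩
    · rintro ⟨x, hzx, hsub⟩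
      exact ⟨x, hzx, fun y hy => ⟨x, hy, hsub⟩⟩
end

section
/- Let (S,R) be a PRAX and R^# the transitive closure of R. For B ⊆ S define the l-scedastic approximation B^{l̂} = (B^l ∖ B^{l_#})^l. Then for every B ⊆ S: ((B^l ∖ B^{l_#})^l)^{l_#} = ∅, and consequently the l-scedastic approximation is idempotent: B^{l̂ l̂} = B^{l̂}. -/
/-- The l-scedastic approximation `B^{l̂} = (B^l ∖ B^{l_#})^l`. -/
def lHat {S : Type*} (R : S → S → Prop) (B : Set S) : Set S :=
  lowerP R (lowerP R B \ lowerT R B)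

/-- in a PRAX, `((B^l ∖ B^{l_#})^l)^{l_#} = ∅`, and hence the
l-scedastic approximation is idempotent: `B^{l̂ l̂} = B^{l̂}`. -/
theorem lHat_idempotent {S : Type*} (R : S → S → Prop)
    (hrefl : ∀ x : S, R x x) (hproto : ProtoTransitive R) (B : Set S) :
    lowerT R (lHat R B) = ∅ ∧ lHat R (lHat R B) = lHat R B := by
  have hlP_sub : ∀ A : Set S, lowerP R A ⊆ A := by
    rintro A z ⟨x, hz, hsub⟩; exact hsub hz
  have hlT_sub : ∀ A : Set S, lowerT R A ⊆ A := by
    rintro A z ⟨x, hz, hsub⟩; exact hsub hz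
  have hlP_idem : ∀ A : Set S, lowerP R (lowerP R A) = lowerP R A := by
    intro A
    apply Set.Subset.antisymm (hlP_sub _)
    rintro z ⟨x, hz, hsub⟩
    exact ⟨x, hz, fun y hy => ⟨x, hy, hsub⟩⟩
  have h1 : lowerT R (lHat R B) = ∅ := by
    apply Set.eq_empty_iff_forall_notMem.2
    rintro z ⟨x, hz, hsub⟩
    have hx : x ∈ nbhdT R x := Relation.TransGen.single (hrefl x)
    have hxHat : x ∈ lHat R B := hsub hx
    have hxdiff : x ∈ lowerP R B \ lowerT R B := hlP_sub _ hxHat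
    exact hxdiff.2 ⟨x, hx, fun y hy => hlP_sub _ (hlP_sub _ (hsub hy)).1⟩
  refine ⟨h1, ?_⟩
  show lowerP R (lowerP R (lHat R B) \ lowerT R (lHat R B)) = lHat R B
  rw [h1, Set.diff_empty]
  rw [show lowerP R (lHat R B) = lHat R B from hlP_idem _]
  exact hlP_idem _
end

section
/- In a PRAX (S,R), the relation R^h = R^⋋ ∩ R^• is empty. -/
/-- Predecessor (inverted successor) neighborhood `[x]ᵢ = {y | R x y}`. -/
def nbhdI {S : Type*} (R : S → S → Prop) (x : S) : Set S := {y | R x y}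

/-- `R^• a b` iff `R a b` and not both `R^# a b` and `R^# b a` (with `R^#` the
transitive closure). -/
def rDot {S : Type*} (R : S → S → Prop) : S → S → Prop :=
  fun a b => R a b ∧ ¬ (Relation.TransGen R a b ∧ Relation.TransGen R b a)

/-- `R^⋋ a b` iff `[b] ⊂ [a]` and `[a]ᵢ ⊂ [b]ᵢ` (proper inclusions). -/
def rLf {S : Type*} (R : S → S → Prop) : S → S → Prop :=
  fun a b => nbhd R b ⊂ nbhd R a ∧ nbhdI R a ⊂ nbhdI R b

/-- `R^h a b` iff `R^⋋ a b` and `R^• a b`. -/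
def rH {S : Type*} (R : S → S → Prop) : S → S → Prop :=
  fun a b => rLf R a b ∧ rDot R a b

/-- in a PRAX, the relation `R^h = R^⋋ ∩ R^•` is empty. -/
theorem rH_empty {S : Type*} (R : S → S → Prop)
    (hrefl : ∀ x : S, R x x) (hproto : ProtoTransitive R) :
    ∀ a b : S, ¬ rH R a b := by
  rintro a b ⟨⟨hsub, _⟩, hab, hnot⟩
  exact hnot ⟨Relation.TransGen.single hab,
    Relation.TransGen.single (hsub.1 (hrefl b))⟩
end
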